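/- For the Finsler function F = (e^{−x2} y1 (y2³ + y3³ + y4³)^{1/3})^{1/2} on U = {(x,y) ∈ ℝ⁴×ℝ⁴ : y2 ≠ 0, y4 ≠ 0}, the Barthel connection has nonzero coefficients N^2_2 = −(4y2³ + y3³ + y4³)/(4y2²), N^2_3 = (3/4)y3²/y2, N^2_4 = (3/4)y4²/y2, N^3_2 = −(3/4)y3, N^3_3 = −(3/4)y2, N^4_2 = −(3/4)y4, N^4_4 = −(3/4)y2, and all others vanish. -/

import Mathlib

open scoped BigOperators

/-- Partial derivative of `f` with respect to the `j`-th coordinate at `v`. -/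
noncomputable def pd {n : ℕ} (f : (Fin n → ℝ) → ℝ) (j : Fin n) (v : Fin n → ℝ) : ℝ :=
  deriv (fun t => f (Function.update v j t)) (v j)

/-- The square of the Finsler function: `F² = e^{−x2} y1 (y2³ + y3³ + y4³)^{1/3}`. -/
noncomputable def F2 (x y : Fin 4 → ℝ) : ℝ :=
  Real.exp (-(x 1)) * (y 0) * ((y 1) ^ 3 + (y 2) ^ 3 + (y 3) ^ 3) ^ ((1 : ℝ) / 3)

/-- The open set `U`: `y2 ≠ 0`, `y4 ≠ 0` (and the quantities under the roots positive). -/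
def U (x y : Fin 4 → ℝ) : Prop :=
  y 1 ≠ 0 ∧ y 3 ≠ 0 ∧ 0 < y 0 ∧ 0 < (y 1) ^ 3 + (y 2) ^ 3 + (y 3) ^ 3

noncomputable def Sc (y : Fin 4 → ℝ) : ℝ := (y 1)^3 + (y 2)^3 + (y 3)^3

noncomputable def DD (x y : Fin 4 → ℝ) : Fin 4 → ℝ :=
  ![Real.exp (-(x 1)) * Sc y ^ ((1:ℝ)/3),
    Real.exp (-(x 1)) * y 0 * ((y 1)^2 * Sc y ^ ((1:ℝ)/3 - 1)),
    Real.exp (-(x 1)) * y 0 * ((y 2)^2 * Sc y ^ ((1:ℝ)/3 - 1)),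
    Real.exp (-(x 1)) * y 0 * ((y 3)^2 * Sc y ^ ((1:ℝ)/3 - 1))]

lemma hd_rpow {f : ℝ → ℝ} {f' t : ℝ} (p : ℝ) (hf : HasDerivAt f f' t) (h : f t ≠ 0) :
    HasDerivAt (fun s => (f s) ^ p) (p * (f t) ^ (p-1) * f') t :=
  (Real.hasDerivAt_rpow_const (p := p) (Or.inl h)).comp t hf

lemma pdF2_0 (x y : Fin 4 → ℝ) :
    pd (fun y'' => F2 x y'') 0 y = DD x y 0 := by
  have hfun : (fun t => F2 x (Function.update y 0 t))
      = fun t => (Real.exp (-(x 1)) * ((y 1)^3 + (y 2)^3 + (y 3)^3) ^ ((1:ℝ)/3)) * t := by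
    funext t; simp [F2, Function.update_apply]; ring
  have hd : HasDerivAt (fun t : ℝ =>
      (Real.exp (-(x 1)) * ((y 1)^3 + (y 2)^3 + (y 3)^3) ^ ((1:ℝ)/3)) * t)
      (Real.exp (-(x 1)) * ((y 1)^3 + (y 2)^3 + (y 3)^3) ^ ((1:ℝ)/3)) (y 0) := by
    simpa using (hasDerivAt_id (y 0)).const_mul
      (Real.exp (-(x 1)) * ((y 1)^3 + (y 2)^3 + (y 3)^3) ^ ((1:ℝ)/3))
  rw [pd, hfun, hd.deriv]
  simp [DD, Sc]

lemma pdF2_1 (x y : Fin 4 → ℝ) (hS : 0 < Sc y) :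
    pd (fun y'' => F2 x y'') 1 y = DD x y 1 := by
  have hfun : (fun t => F2 x (Function.update y 1 t))
      = fun t => Real.exp (-(x 1)) * y 0 * ((t^3 + (y 2)^3 + (y 3)^3) ^ ((1:ℝ)/3)) := by
    funext t; simp [F2, Function.update_apply]
  have h1 : HasDerivAt (fun s : ℝ => s^3 + (y 2)^3 + (y 3)^3) (3*(y 1)^2) (y 1) := by
    simpa using ((hasDerivAt_pow 3 (y 1)).add_const ((y 2)^3)).add_const ((y 3)^3)
  have h3 := (hd_rpow ((1:ℝ)/3) h1 (by simpa [Sc] using hS.ne')).const_mul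
    (Real.exp (-(x 1)) * y 0)
  rw [pd, hfun, h3.deriv]
  simp only [DD, Sc, Matrix.cons_val_one, Matrix.head_cons, Matrix.cons_val_zero]
  ring

lemma pdF2_2 (x y : Fin 4 → ℝ) (hS : 0 < Sc y) :
    pd (fun y'' => F2 x y'') 2 y = DD x y 2 := by
  have hfun : (fun t => F2 x (Function.update y 2 t))
      = fun t => Real.exp (-(x 1)) * y 0 * (((y 1)^3 + t^3 + (y 3)^3) ^ ((1:ℝ)/3)) := by
    funext t; simp [F2, Function.update_apply]
  have h1 : HasDerivAt (fun s : ℝ => (y 1)^3 + s^3 + (y 3)^3) (3*(y 2)^2) (y 2) := by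
    simpa using (((hasDerivAt_pow 3 (y 2)).const_add ((y 1)^3)).add_const ((y 3)^3))
  have h3 := (hd_rpow ((1:ℝ)/3) h1 (by simpa [Sc] using hS.ne')).const_mul
    (Real.exp (-(x 1)) * y 0)
  rw [pd, hfun, h3.deriv]
  simp only [DD, Sc, Matrix.cons_val_two, Matrix.tail_cons, Matrix.head_cons]
  ring

lemma pdF2_3 (x y : Fin 4 → ℝ) (hS : 0 < Sc y) :
    pd (fun y'' => F2 x y'') 3 y = DD x y 3 := by
  have hfun : (fun t => F2 x (Function.update y 3 t))
      = fun t => Real.exp (-(x 1)) * y 0 * (((y 1)^3 + (y 2)^3 + t^3) ^ ((1:ℝ)/3)) := by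
    funext t; simp [F2, Function.update_apply]
  have h1 : HasDerivAt (fun s : ℝ => (y 1)^3 + (y 2)^3 + s^3) (3*(y 3)^2) (y 3) := by
    simpa using ((hasDerivAt_pow 3 (y 3)).const_add ((y 1)^3 + (y 2)^3))
  have h3 := (hd_rpow ((1:ℝ)/3) h1 (by simpa [Sc] using hS.ne')).const_mul
    (Real.exp (-(x 1)) * y 0)
  rw [pd, hfun, h3.deriv]
  simp only [DD, Sc, Matrix.cons_val_three, Matrix.tail_cons, Matrix.head_cons]
  ring

lemma pdF2_at (x y : Fin 4 → ℝ) (hS : 0 < Sc y) (k : Fin 4) :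
    pd (fun y'' => F2 x y'') k y = DD x y k := by
  fin_cases k
  · exact pdF2_0 x y
  · exact pdF2_1 x y hS
  · exact pdF2_2 x y hS
  · exact pdF2_3 x y hS

lemma evSc (y : Fin 4 → ℝ) (i : Fin 4) (hS : 0 < Sc y) :
    ∀ᶠ t in nhds (y i), 0 < Sc (Function.update y i t) := by
  have hc : Continuous fun t : ℝ => Sc (Function.update y i t) := by
    fin_cases i <;> simp [Sc, Function.update_apply] <;> fun_prop
  have h0 : (0:ℝ) < Sc (Function.update y i (y i)) := by simpa using hS
  exact hc.continuousAt.eventually (eventually_gt_nhds h0)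

noncomputable def Mgm (x y : Fin 4 → ℝ) : Fin 4 → Fin 4 → ℝ :=
  let E := Real.exp (-(x 1)); let p := Sc y ^ ((1:ℝ)/3 - 1); let q := Sc y ^ ((1:ℝ)/3 - 2)
  ![![0, E*(y 1)^2*p/2, E*(y 2)^2*p/2, E*(y 3)^2*p/2],
    ![E*(y 1)^2*p/2, E*(y 0)*((y 1)*p - (y 1)^4*q), -(E*(y 0)*(y 1)^2*(y 2)^2*q), -(E*(y 0)*(y 1)^2*(y 3)^2*q)],
    ![E*(y 2)^2*p/2, -(E*(y 0)*(y 2)^2*(y 1)^2*q), E*(y 0)*((y 2)*p - (y 2)^4*q), -(E*(y 0)*(y 2)^2*(y 3)^2*q)],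
    ![E*(y 3)^2*p/2, -(E*(y 0)*(y 3)^2*(y 1)^2*q), -(E*(y 0)*(y 3)^2*(y 2)^2*q), E*(y 0)*((y 3)*p - (y 3)^4*q)]]

lemma gval (x y : Fin 4 → ℝ) (hS : 0 < Sc y) (i j : Fin 4) :
    (1/2) * pd (fun y' => pd (fun y'' => F2 x y'') j y') i y = Mgm x y i j := by
  have hE : (Real.exp (-(x 1))) ≠ 0 := Real.exp_ne_zero _
  have hSne : (y 1)^3 + (y 2)^3 + (y 3)^3 ≠ 0 := by simpa [Sc] using hS.ne'
  have hev : ∀ (i j : Fin 4), (fun t => pd (fun y'' => F2 x y'') j (Function.update y i t))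
      =ᶠ[nhds (y i)] (fun t => DD x (Function.update y i t) j) :=
    fun i j => (evSc y i hS).mono (fun t ht => pdF2_at x _ ht j)
  have hc1 : HasDerivAt (fun s : ℝ => s^3 + (y 2)^3 + (y 3)^3) (3*(y 1)^2) (y 1) := by
    simpa using ((hasDerivAt_pow 3 (y 1)).add_const ((y 2)^3)).add_const ((y 3)^3)
  have hc2 : HasDerivAt (fun s : ℝ => (y 1)^3 + s^3 + (y 3)^3) (3*(y 2)^2) (y 2) := by
    simpa using (((hasDerivAt_pow 3 (y 2)).const_add ((y 1)^3)).add_const ((y 3)^3))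
  have hc3 : HasDerivAt (fun s : ℝ => (y 1)^3 + (y 2)^3 + s^3) (3*(y 3)^2) (y 3) := by
    simpa using ((hasDerivAt_pow 3 (y 3)).const_add ((y 1)^3 + (y 2)^3))
  have he2 : (1:ℝ)/3 - 1 - 1 = (1:ℝ)/3 - 2 := by norm_num
  fin_cases i <;> fin_cases j
  -- (0,0)
  · show (1/2) * pd (fun y' => pd (fun y'' => F2 x y'') 0 y') 0 y = Mgm x y 0 0
    rw [pd, Filter.EventuallyEq.deriv_eq (hev 0 0)]
    have hfun : (fun t => DD x (Function.update y 0 t) 0)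
        = fun _ : ℝ => DD x y 0 := by
      funext t; simp [DD, Sc, Function.update_apply]
    rw [hfun, deriv_const]; simp [Mgm]
  -- (0,1)
  · show (1/2) * pd (fun y' => pd (fun y'' => F2 x y'') 1 y') 0 y = Mgm x y 0 1
    rw [pd, Filter.EventuallyEq.deriv_eq (hev 0 1)]
    have hfun : (fun t => DD x (Function.update y 0 t) 1)
        = fun t : ℝ => (Real.exp (-(x 1)) * ((y 1)^2 * Sc y ^ ((1:ℝ)/3 - 1))) * t := by
      funext t; simp [DD, Sc, Function.update_apply]; ring
    have hd : HasDerivAt (fun t : ℝ => (Real.exp (-(x 1)) * ((y 1)^2 * Sc y ^ ((1:ℝ)/3 - 1))) * t)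
        (Real.exp (-(x 1)) * ((y 1)^2 * Sc y ^ ((1:ℝ)/3 - 1))) (y 0) := by
      simpa using (hasDerivAt_id (y 0)).const_mul (Real.exp (-(x 1)) * ((y 1)^2 * Sc y ^ ((1:ℝ)/3 - 1)))
    rw [hfun, hd.deriv]; simp [Mgm, Sc]; ring
  -- (0,2)
  · show (1/2) * pd (fun y' => pd (fun y'' => F2 x y'') 2 y') 0 y = Mgm x y 0 2
    rw [pd, Filter.EventuallyEq.deriv_eq (hev 0 2)]
    have hfun : (fun t => DD x (Function.update y 0 t) 2)
        = fun t : ℝ => (Real.exp (-(x 1)) * ((y 2)^2 * Sc y ^ ((1:ℝ)/3 - 1))) * t := by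
      funext t; simp [DD, Sc, Function.update_apply]; ring
    have hd : HasDerivAt (fun t : ℝ => (Real.exp (-(x 1)) * ((y 2)^2 * Sc y ^ ((1:ℝ)/3 - 1))) * t)
        (Real.exp (-(x 1)) * ((y 2)^2 * Sc y ^ ((1:ℝ)/3 - 1))) (y 0) := by
      simpa using (hasDerivAt_id (y 0)).const_mul (Real.exp (-(x 1)) * ((y 2)^2 * Sc y ^ ((1:ℝ)/3 - 1)))
    rw [hfun, hd.deriv]; simp [Mgm, Sc]; ring
  -- (0,3)
  · show (1/2) * pd (fun y' => pd (fun y'' => F2 x y'') 3 y') 0 y = Mgm x y 0 3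
    rw [pd, Filter.EventuallyEq.deriv_eq (hev 0 3)]
    have hfun : (fun t => DD x (Function.update y 0 t) 3)
        = fun t : ℝ => (Real.exp (-(x 1)) * ((y 3)^2 * Sc y ^ ((1:ℝ)/3 - 1))) * t := by
      funext t; simp [DD, Sc, Function.update_apply]; ring
    have hd : HasDerivAt (fun t : ℝ => (Real.exp (-(x 1)) * ((y 3)^2 * Sc y ^ ((1:ℝ)/3 - 1))) * t)
        (Real.exp (-(x 1)) * ((y 3)^2 * Sc y ^ ((1:ℝ)/3 - 1))) (y 0) := by
      simpa using (hasDerivAt_id (y 0)).const_mul (Real.exp (-(x 1)) * ((y 3)^2 * Sc y ^ ((1:ℝ)/3 - 1)))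
    rw [hfun, hd.deriv]; simp [Mgm, Sc]; ring
  -- (1,0)
  · show (1/2) * pd (fun y' => pd (fun y'' => F2 x y'') 0 y') 1 y = Mgm x y 1 0
    rw [pd, Filter.EventuallyEq.deriv_eq (hev 1 0)]
    have hfun : (fun t => DD x (Function.update y 1 t) 0)
        = fun t : ℝ => Real.exp (-(x 1)) * ((t^3 + (y 2)^3 + (y 3)^3) ^ ((1:ℝ)/3)) := by
      funext t; simp [DD, Sc, Function.update_apply]
    have hd := (hd_rpow ((1:ℝ)/3) hc1 hSne).const_mul (Real.exp (-(x 1)))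
    rw [hfun, hd.deriv]; simp [Mgm, Sc]; ring
  -- (1,1)
  · show (1/2) * pd (fun y' => pd (fun y'' => F2 x y'') 1 y') 1 y = Mgm x y 1 1
    rw [pd, Filter.EventuallyEq.deriv_eq (hev 1 1)]
    have hfun : (fun t => DD x (Function.update y 1 t) 1)
        = fun t : ℝ => Real.exp (-(x 1)) * (y 0) * (t^2 * (t^3 + (y 2)^3 + (y 3)^3) ^ ((1:ℝ)/3 - 1)) := by
      funext t; simp [DD, Sc, Function.update_apply]
    have hd := ((hasDerivAt_pow 2 (y 1)).mul (hd_rpow ((1:ℝ)/3 - 1) hc1 hSne)).const_mul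
      (Real.exp (-(x 1)) * (y 0))
    rw [hfun]; erw [hd.deriv]; rw [he2]; simp [Mgm, Sc]; ring
  -- (1,2)
  · show (1/2) * pd (fun y' => pd (fun y'' => F2 x y'') 2 y') 1 y = Mgm x y 1 2
    rw [pd, Filter.EventuallyEq.deriv_eq (hev 1 2)]
    have hfun : (fun t => DD x (Function.update y 1 t) 2)
        = fun t : ℝ => (Real.exp (-(x 1)) * (y 0) * (y 2)^2) * ((t^3 + (y 2)^3 + (y 3)^3) ^ ((1:ℝ)/3 - 1)) := by
      funext t; simp [DD, Sc, Function.update_apply]; ring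
    have hd := (hd_rpow ((1:ℝ)/3 - 1) hc1 hSne).const_mul (Real.exp (-(x 1)) * (y 0) * (y 2)^2)
    rw [hfun, hd.deriv, he2]; simp [Mgm, Sc]; ring
  -- (1,3)
  · show (1/2) * pd (fun y' => pd (fun y'' => F2 x y'') 3 y') 1 y = Mgm x y 1 3
    rw [pd, Filter.EventuallyEq.deriv_eq (hev 1 3)]
    have hfun : (fun t => DD x (Function.update y 1 t) 3)
        = fun t : ℝ => (Real.exp (-(x 1)) * (y 0) * (y 3)^2) * ((t^3 + (y 2)^3 + (y 3)^3) ^ ((1:ℝ)/3 - 1)) := by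
      funext t; simp [DD, Sc, Function.update_apply]; ring
    have hd := (hd_rpow ((1:ℝ)/3 - 1) hc1 hSne).const_mul (Real.exp (-(x 1)) * (y 0) * (y 3)^2)
    rw [hfun, hd.deriv, he2]; simp [Mgm, Sc]; ring
  -- (2,0)
  · show (1/2) * pd (fun y' => pd (fun y'' => F2 x y'') 0 y') 2 y = Mgm x y 2 0
    rw [pd, Filter.EventuallyEq.deriv_eq (hev 2 0)]
    have hfun : (fun t => DD x (Function.update y 2 t) 0)
        = fun t : ℝ => Real.exp (-(x 1)) * (((y 1)^3 + t^3 + (y 3)^3) ^ ((1:ℝ)/3)) := by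
      funext t; simp [DD, Sc, Function.update_apply]
    have hd := (hd_rpow ((1:ℝ)/3) hc2 hSne).const_mul (Real.exp (-(x 1)))
    rw [hfun, hd.deriv]; simp [Mgm, Sc]; ring
  -- (2,1)
  · show (1/2) * pd (fun y' => pd (fun y'' => F2 x y'') 1 y') 2 y = Mgm x y 2 1
    rw [pd, Filter.EventuallyEq.deriv_eq (hev 2 1)]
    have hfun : (fun t => DD x (Function.update y 2 t) 1)
        = fun t : ℝ => (Real.exp (-(x 1)) * (y 0) * (y 1)^2) * (((y 1)^3 + t^3 + (y 3)^3) ^ ((1:ℝ)/3 - 1)) := by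
      funext t; simp [DD, Sc, Function.update_apply]; ring
    have hd := (hd_rpow ((1:ℝ)/3 - 1) hc2 hSne).const_mul (Real.exp (-(x 1)) * (y 0) * (y 1)^2)
    rw [hfun, hd.deriv, he2]; simp [Mgm, Sc]; ring
  -- (2,2)
  · show (1/2) * pd (fun y' => pd (fun y'' => F2 x y'') 2 y') 2 y = Mgm x y 2 2
    rw [pd, Filter.EventuallyEq.deriv_eq (hev 2 2)]
    have hfun : (fun t => DD x (Function.update y 2 t) 2)
        = fun t : ℝ => Real.exp (-(x 1)) * (y 0) * (t^2 * ((y 1)^3 + t^3 + (y 3)^3) ^ ((1:ℝ)/3 - 1)) := by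
      funext t; simp [DD, Sc, Function.update_apply]
    have hd := ((hasDerivAt_pow 2 (y 2)).mul (hd_rpow ((1:ℝ)/3 - 1) hc2 hSne)).const_mul
      (Real.exp (-(x 1)) * (y 0))
    rw [hfun]; erw [hd.deriv]; rw [he2]; simp [Mgm, Sc]; ring
  -- (2,3)
  · show (1/2) * pd (fun y' => pd (fun y'' => F2 x y'') 3 y') 2 y = Mgm x y 2 3
    rw [pd, Filter.EventuallyEq.deriv_eq (hev 2 3)]
    have hfun : (fun t => DD x (Function.update y 2 t) 3)
        = fun t : ℝ => (Real.exp (-(x 1)) * (y 0) * (y 3)^2) * (((y 1)^3 + t^3 + (y 3)^3) ^ ((1:ℝ)/3 - 1)) := by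
      funext t; simp [DD, Sc, Function.update_apply]; ring
    have hd := (hd_rpow ((1:ℝ)/3 - 1) hc2 hSne).const_mul (Real.exp (-(x 1)) * (y 0) * (y 3)^2)
    rw [hfun, hd.deriv, he2]; simp [Mgm, Sc]; ring
  -- (3,0)
  · show (1/2) * pd (fun y' => pd (fun y'' => F2 x y'') 0 y') 3 y = Mgm x y 3 0
    rw [pd, Filter.EventuallyEq.deriv_eq (hev 3 0)]
    have hfun : (fun t => DD x (Function.update y 3 t) 0)
        = fun t : ℝ => Real.exp (-(x 1)) * (((y 1)^3 + (y 2)^3 + t^3) ^ ((1:ℝ)/3)) := by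
      funext t; simp [DD, Sc, Function.update_apply]
    have hd := (hd_rpow ((1:ℝ)/3) hc3 hSne).const_mul (Real.exp (-(x 1)))
    rw [hfun, hd.deriv]; simp [Mgm, Sc]; ring
  -- (3,1)
  · show (1/2) * pd (fun y' => pd (fun y'' => F2 x y'') 1 y') 3 y = Mgm x y 3 1
    rw [pd, Filter.EventuallyEq.deriv_eq (hev 3 1)]
    have hfun : (fun t => DD x (Function.update y 3 t) 1)
        = fun t : ℝ => (Real.exp (-(x 1)) * (y 0) * (y 1)^2) * (((y 1)^3 + (y 2)^3 + t^3) ^ ((1:ℝ)/3 - 1)) := by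
      funext t; simp [DD, Sc, Function.update_apply]; ring
    have hd := (hd_rpow ((1:ℝ)/3 - 1) hc3 hSne).const_mul (Real.exp (-(x 1)) * (y 0) * (y 1)^2)
    rw [hfun, hd.deriv, he2]; simp [Mgm, Sc]; ring
  -- (3,2)
  · show (1/2) * pd (fun y' => pd (fun y'' => F2 x y'') 2 y') 3 y = Mgm x y 3 2
    rw [pd, Filter.EventuallyEq.deriv_eq (hev 3 2)]
    have hfun : (fun t => DD x (Function.update y 3 t) 2)
        = fun t : ℝ => (Real.exp (-(x 1)) * (y 0) * (y 2)^2) * (((y 1)^3 + (y 2)^3 + t^3) ^ ((1:ℝ)/3 - 1)) := by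
      funext t; simp [DD, Sc, Function.update_apply]; ring
    have hd := (hd_rpow ((1:ℝ)/3 - 1) hc3 hSne).const_mul (Real.exp (-(x 1)) * (y 0) * (y 2)^2)
    rw [hfun, hd.deriv, he2]; simp [Mgm, Sc]; ring
  -- (3,3)
  · show (1/2) * pd (fun y' => pd (fun y'' => F2 x y'') 3 y') 3 y = Mgm x y 3 3
    rw [pd, Filter.EventuallyEq.deriv_eq (hev 3 3)]
    have hfun : (fun t => DD x (Function.update y 3 t) 3)
        = fun t : ℝ => Real.exp (-(x 1)) * (y 0) * (t^2 * ((y 1)^3 + (y 2)^3 + t^3) ^ ((1:ℝ)/3 - 1)) := by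
      funext t; simp [DD, Sc, Function.update_apply]
    have hd := ((hasDerivAt_pow 2 (y 3)).mul (hd_rpow ((1:ℝ)/3 - 1) hc3 hSne)).const_mul
      (Real.exp (-(x 1)) * (y 0))
    rw [hfun]; erw [hd.deriv]; rw [he2]; simp [Mgm, Sc]; ring

noncomputable def Vv (x y : Fin 4 → ℝ) : Fin 4 → ℝ :=
  let E := Real.exp (-(x 1)); let P := Sc y ^ ((1:ℝ)/3)
  ![2*(y 1)/(E*P), (Sc y - (y 1)^3)/(E*P*(y 0)*(y 1)), -((y 1)*(y 2))/(E*P*(y 0)),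
    -((y 1)*(y 3))/(E*P*(y 0))]

lemma P_cube (y : Fin 4 → ℝ) (hS : 0 < Sc y) : (Sc y ^ ((1:ℝ)/3))^3 = Sc y := by
  rw [← Real.rpow_natCast (Sc y ^ ((1:ℝ)/3)) 3, ← Real.rpow_mul hS.le]
  norm_num

lemma hp_eq (y : Fin 4 → ℝ) (hS : 0 < Sc y) :
    Sc y ^ ((1:ℝ)/3 - 1) = Sc y ^ ((1:ℝ)/3) / Sc y := by
  rw [Real.rpow_sub hS, Real.rpow_one]

lemma hq_eq (y : Fin 4 → ℝ) (hS : 0 < Sc y) :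
    Sc y ^ ((1:ℝ)/3 - 2) = Sc y ^ ((1:ℝ)/3) / (Sc y)^2 := by
  rw [Real.rpow_sub hS, show (2:ℝ) = ((2:ℕ):ℝ) by norm_num, Real.rpow_natCast]

set_option maxHeartbeats 1000000 in
lemma MgmV (x y : Fin 4 → ℝ) (hS : 0 < Sc y) (h0 : y 0 ≠ 0) (h1 : y 1 ≠ 0) (k : Fin 4) :
    (∑ j, Mgm x y k j * Vv x y j) = if k = (1 : Fin 4) then (1:ℝ) else 0 := by
  have hE : Real.exp (-(x 1)) ≠ 0 := Real.exp_ne_zero _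
  have hp' : (((y 1)^3+(y 2)^3+(y 3)^3 : ℝ)) ^ ((1:ℝ)/3 - 1)
      = ((y 1)^3+(y 2)^3+(y 3)^3 : ℝ) ^ ((1:ℝ)/3) / ((y 1)^3+(y 2)^3+(y 3)^3) := by
    simpa [Sc] using hp_eq y hS
  have hq' : (((y 1)^3+(y 2)^3+(y 3)^3 : ℝ)) ^ ((1:ℝ)/3 - 2)
      = ((y 1)^3+(y 2)^3+(y 3)^3 : ℝ) ^ ((1:ℝ)/3) / ((y 1)^3+(y 2)^3+(y 3)^3)^2 := by
    simpa [Sc] using hq_eq y hS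
  have hP3u : ((((y 1)^3+(y 2)^3+(y 3)^3 : ℝ)) ^ ((1:ℝ)/3))^3 = (y 1)^3+(y 2)^3+(y 3)^3 := by
    simpa [Sc] using P_cube y hS
  have hPne' : (((y 1)^3+(y 2)^3+(y 3)^3 : ℝ)) ^ ((1:ℝ)/3) ≠ 0 := by
    have := Real.rpow_pos_of_pos hS ((1:ℝ)/3); simp only [Sc] at this; exact this.ne'
  fin_cases k
  · show (∑ j, Mgm x y 0 j * Vv x y j) = (0:ℝ)
    simp only [Fin.sum_univ_four, Mgm, Vv, Sc, Matrix.cons_val_zero, Matrix.cons_val_one,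
      Matrix.head_cons, Matrix.cons_val_two, Matrix.tail_cons, Matrix.cons_val_three]
    simp only [hp', hq']
    generalize hP : ((y 1)^3+(y 2)^3+(y 3)^3 : ℝ) ^ ((1:ℝ)/3) = P at hP3u hPne' ⊢
    rw [← hP3u]
    field_simp
    linear_combination (y 1 * Real.exp (-(x 1))) * hP3u
  · show (∑ j, Mgm x y 1 j * Vv x y j) = (1:ℝ)
    simp only [Fin.sum_univ_four, Mgm, Vv, Sc, Matrix.cons_val_zero, Matrix.cons_val_one,
      Matrix.head_cons, Matrix.cons_val_two, Matrix.tail_cons, Matrix.cons_val_three]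
    simp only [hp', hq']
    generalize hP : ((y 1)^3+(y 2)^3+(y 3)^3 : ℝ) ^ ((1:ℝ)/3) = P at hP3u hPne' ⊢
    rw [← hP3u]
    field_simp
    linear_combination (-(y 1)^3) * hP3u
  · show (∑ j, Mgm x y 2 j * Vv x y j) = (0:ℝ)
    simp only [Fin.sum_univ_four, Mgm, Vv, Sc, Matrix.cons_val_zero, Matrix.cons_val_one,
      Matrix.head_cons, Matrix.cons_val_two, Matrix.tail_cons, Matrix.cons_val_three]
    simp only [hp', hq']
    generalize hP : ((y 1)^3+(y 2)^3+(y 3)^3 : ℝ) ^ ((1:ℝ)/3) = P at hP3u hPne' ⊢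
    rw [← hP3u]
    field_simp
    linear_combination (-((y 2)^2*(y 1))) * hP3u
  · show (∑ j, Mgm x y 3 j * Vv x y j) = (0:ℝ)
    simp only [Fin.sum_univ_four, Mgm, Vv, Sc, Matrix.cons_val_zero, Matrix.cons_val_one,
      Matrix.head_cons, Matrix.cons_val_two, Matrix.tail_cons, Matrix.cons_val_three]
    simp only [hp', hq']
    generalize hP : ((y 1)^3+(y 2)^3+(y 3)^3 : ℝ) ^ ((1:ℝ)/3) = P at hP3u hPne' ⊢
    rw [← hP3u]
    field_simp
    linear_combination (-((y 3)^2*(y 1))) * hP3u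

set_option maxHeartbeats 1000000 in
lemma Mgmy (x y : Fin 4 → ℝ) (hS : 0 < Sc y) (k : Fin 4) :
    (∑ j, Mgm x y k j * y j) = (1/2) * DD x y k := by
  have hp' : (((y 1)^3+(y 2)^3+(y 3)^3 : ℝ)) ^ ((1:ℝ)/3 - 1)
      = ((y 1)^3+(y 2)^3+(y 3)^3 : ℝ) ^ ((1:ℝ)/3) / ((y 1)^3+(y 2)^3+(y 3)^3) := by
    simpa [Sc] using hp_eq y hS
  have hq' : (((y 1)^3+(y 2)^3+(y 3)^3 : ℝ)) ^ ((1:ℝ)/3 - 2)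
      = ((y 1)^3+(y 2)^3+(y 3)^3 : ℝ) ^ ((1:ℝ)/3) / ((y 1)^3+(y 2)^3+(y 3)^3)^2 := by
    simpa [Sc] using hq_eq y hS
  have hP3u : ((((y 1)^3+(y 2)^3+(y 3)^3 : ℝ)) ^ ((1:ℝ)/3))^3 = (y 1)^3+(y 2)^3+(y 3)^3 := by
    simpa [Sc] using P_cube y hS
  have hPne' : (((y 1)^3+(y 2)^3+(y 3)^3 : ℝ)) ^ ((1:ℝ)/3) ≠ 0 := by
    have := Real.rpow_pos_of_pos hS ((1:ℝ)/3); simp only [Sc] at this; exact this.ne'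
  fin_cases k
  · show (∑ j, Mgm x y 0 j * y j) = (1/2) * DD x y 0
    simp only [Fin.sum_univ_four, Mgm, DD, Sc, Matrix.cons_val_zero, Matrix.cons_val_one,
      Matrix.head_cons, Matrix.cons_val_two, Matrix.tail_cons, Matrix.cons_val_three]
    simp only [hp', hq']
    generalize hP : ((y 1)^3+(y 2)^3+(y 3)^3 : ℝ) ^ ((1:ℝ)/3) = P at hP3u hPne' ⊢
    rw [← hP3u]
    field_simp
    linear_combination (-Real.exp (-(x 1))) * hP3u
  · show (∑ j, Mgm x y 1 j * y j) = (1/2) * DD x y 1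
    simp only [Fin.sum_univ_four, Mgm, DD, Sc, Matrix.cons_val_zero, Matrix.cons_val_one,
      Matrix.head_cons, Matrix.cons_val_two, Matrix.tail_cons, Matrix.cons_val_three]
    simp only [hp', hq']
    generalize hP : ((y 1)^3+(y 2)^3+(y 3)^3 : ℝ) ^ ((1:ℝ)/3) = P at hP3u hPne' ⊢
    rw [← hP3u]
    field_simp
    linear_combination (2*(y 1)^2*(y 0)) * hP3u
  · show (∑ j, Mgm x y 2 j * y j) = (1/2) * DD x y 2
    simp only [Fin.sum_univ_four, Mgm, DD, Sc, Matrix.cons_val_zero, Matrix.cons_val_one,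
      Matrix.head_cons, Matrix.cons_val_two, Matrix.tail_cons, Matrix.cons_val_three]
    simp only [hp', hq']
    generalize hP : ((y 1)^3+(y 2)^3+(y 3)^3 : ℝ) ^ ((1:ℝ)/3) = P at hP3u hPne' ⊢
    rw [← hP3u]
    field_simp
    linear_combination (2*(y 2)^2*(y 0)) * hP3u
  · show (∑ j, Mgm x y 3 j * y j) = (1/2) * DD x y 3
    simp only [Fin.sum_univ_four, Mgm, DD, Sc, Matrix.cons_val_zero, Matrix.cons_val_one,
      Matrix.head_cons, Matrix.cons_val_two, Matrix.tail_cons, Matrix.cons_val_three]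
    simp only [hp', hq']
    generalize hP : ((y 1)^3+(y 2)^3+(y 3)^3 : ℝ) ^ ((1:ℝ)/3) = P at hP3u hPne' ⊢
    rw [← hP3u]
    field_simp
    linear_combination (2*(y 3)^2*(y 0)) * hP3u

lemma pd_exp (x : Fin 4 → ℝ) (C : ℝ) (j : Fin 4) :
    pd (fun x' => Real.exp (-(x' 1)) * C) j x
      = if j = (1:Fin 4) then -(Real.exp (-(x 1)) * C) else 0 := by
  fin_cases j
  · show pd (fun x' => Real.exp (-(x' 1)) * C) 0 x = (0:ℝ)
    have hfun : (fun t => Real.exp (-(Function.update x 0 t 1)) * C)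
        = fun _ : ℝ => Real.exp (-(x 1)) * C := by funext t; simp [Function.update_apply]
    rw [pd, hfun, deriv_const]
  · show pd (fun x' => Real.exp (-(x' 1)) * C) 1 x = -(Real.exp (-(x 1)) * C)
    have hfun : (fun t => Real.exp (-(Function.update x 1 t 1)) * C)
        = fun t : ℝ => Real.exp (-t) * C := by funext t; simp
    have hd : HasDerivAt (fun t : ℝ => Real.exp (-t) * C) (-(Real.exp (-(x 1)) * C)) (x 1) := by
      have := ((hasDerivAt_id' (x := x 1)).neg.exp).mul_const C
      simpa using this
    rw [pd, hfun, hd.deriv]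
  · show pd (fun x' => Real.exp (-(x' 1)) * C) 2 x = (0:ℝ)
    have hfun : (fun t => Real.exp (-(Function.update x 2 t 1)) * C)
        = fun _ : ℝ => Real.exp (-(x 1)) * C := by funext t; simp [Function.update_apply]
    rw [pd, hfun, deriv_const]
  · show pd (fun x' => Real.exp (-(x' 1)) * C) 3 x = (0:ℝ)
    have hfun : (fun t => Real.exp (-(Function.update x 3 t 1)) * C)
        = fun _ : ℝ => Real.exp (-(x 1)) * C := by funext t; simp [Function.update_apply]
    rw [pd, hfun, deriv_const]

lemma brval (x y : Fin 4 → ℝ) (hS : 0 < Sc y) (k : Fin 4) :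
    (∑ j, y j * pd (fun x' => pd (fun y' => F2 x' y') k y) j x)
      - pd (fun x' => F2 x' y) k x
    = -((y 1) * DD x y k) + (if k = (1:Fin 4) then F2 x y else 0) := by
  have hF : (fun x' => F2 x' y)
      = fun x' => Real.exp (-(x' 1)) * (y 0 * ((y 1)^3 + (y 2)^3 + (y 3)^3) ^ ((1:ℝ)/3)) := by
    funext x'; simp [F2]; ring
  fin_cases k
  · show (∑ j, y j * pd (fun x' => pd (fun y' => F2 x' y') 0 y) j x)
        - pd (fun x' => F2 x' y) 0 x
      = -((y 1) * DD x y 0) + (if (0:Fin 4) = (1:Fin 4) then F2 x y else 0)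
    have hin : (fun x' => pd (fun y' => F2 x' y') 0 y)
        = fun x' => Real.exp (-(x' 1)) * (Sc y ^ ((1:ℝ)/3)) := by
      funext x'; rw [pdF2_at x' y hS 0]; simp [DD]
    rw [hin, hF]
    simp only [Fin.sum_univ_four, pd_exp]
    simp only [Fin.reduceEq, if_false, ite_false, if_true, ite_true]
    norm_num [DD, F2, Sc]
  · show (∑ j, y j * pd (fun x' => pd (fun y' => F2 x' y') 1 y) j x)
        - pd (fun x' => F2 x' y) 1 x
      = -((y 1) * DD x y 1) + (if (1:Fin 4) = (1:Fin 4) then F2 x y else 0)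
    have hin : (fun x' => pd (fun y' => F2 x' y') 1 y)
        = fun x' => Real.exp (-(x' 1)) * (y 0 * ((y 1)^2 * Sc y ^ ((1:ℝ)/3 - 1))) := by
      funext x'; rw [pdF2_at x' y hS 1]; simp [DD]; ring
    rw [hin, hF]
    simp only [Fin.sum_univ_four, pd_exp]
    simp only [Fin.reduceEq, if_false, ite_false, if_true, ite_true]
    norm_num [DD, F2, Sc]
    all_goals (first | ring1 | exact Or.inl (by ring1) | tauto)
  · show (∑ j, y j * pd (fun x' => pd (fun y' => F2 x' y') 2 y) j x)
        - pd (fun x' => F2 x' y) 2 x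
      = -((y 1) * DD x y 2) + (if (2:Fin 4) = (1:Fin 4) then F2 x y else 0)
    have hin : (fun x' => pd (fun y' => F2 x' y') 2 y)
        = fun x' => Real.exp (-(x' 1)) * (y 0 * ((y 2)^2 * Sc y ^ ((1:ℝ)/3 - 1))) := by
      funext x'; rw [pdF2_at x' y hS 2]; simp [DD]; ring
    rw [hin, hF]
    simp only [Fin.sum_univ_four, pd_exp]
    simp only [Fin.reduceEq, if_false, ite_false, if_true, ite_true]
    norm_num [DD, F2, Sc, Matrix.cons_val_two, Matrix.tail_cons, Matrix.head_cons]
    all_goals (first | ring1 | exact Or.inl (by ring1) | tauto)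
  · show (∑ j, y j * pd (fun x' => pd (fun y' => F2 x' y') 3 y) j x)
        - pd (fun x' => F2 x' y) 3 x
      = -((y 1) * DD x y 3) + (if (3:Fin 4) = (1:Fin 4) then F2 x y else 0)
    have hin : (fun x' => pd (fun y' => F2 x' y') 3 y)
        = fun x' => Real.exp (-(x' 1)) * (y 0 * ((y 3)^2 * Sc y ^ ((1:ℝ)/3 - 1))) := by
      funext x'; rw [pdF2_at x' y hS 3]; simp [DD]; ring
    rw [hin, hF]
    simp only [Fin.sum_univ_four, pd_exp]
    simp only [Fin.reduceEq, if_false, ite_false, if_true, ite_true]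
    norm_num [DD, F2, Sc, Matrix.cons_val_three, Matrix.tail_cons, Matrix.head_cons]
    all_goals (first | ring1 | exact Or.inl (by ring1) | tauto)

noncomputable def Gexp (y : Fin 4 → ℝ) : Fin 4 → ℝ :=
  ![0, ((y 2)^3 + (y 3)^3 - 2*(y 1)^3)/(4*(y 1)),
    -((3:ℝ)/4)*((y 1)*(y 2)), -((3:ℝ)/4)*((y 1)*(y 3))]

set_option maxHeartbeats 1000000 in
lemma Gval (g ginv : (Fin 4 → ℝ) → (Fin 4 → ℝ) → Fin 4 → Fin 4 → ℝ)
    (G : (Fin 4 → ℝ) → (Fin 4 → ℝ) → Fin 4 → ℝ)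
    (hg : ∀ x y, U x y → ∀ i j,
      g x y i j = (1 / 2) * pd (fun y' => pd (fun y'' => F2 x y'') j y') i y)
    (hginv : ∀ x y, U x y → ∀ i k,
      (∑ j, ginv x y i j * g x y j k) = if i = k then (1 : ℝ) else 0)
    (hG : ∀ x y, U x y → ∀ i,
      G x y i = (1 / 4) * ∑ k, ginv x y i k *
        ((∑ j, y j * pd (fun x' => pd (fun y' => F2 x' y') k y) j x)
          - pd (fun x' => F2 x' y) k x)) :
    ∀ x y, U x y → ∀ i, G x y i = Gexp y i := by
  intro x y hU i
  obtain ⟨h1, h3, h0, hS0⟩ := hU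
  have hS : 0 < Sc y := by simpa [Sc] using hS0
  have hgv : ∀ a b, g x y a b = Mgm x y a b := fun a b =>
    (hg x y ⟨h1, h3, h0, hS0⟩ a b).trans (gval x y hS a b)
  have hid : ∀ a k, (∑ jj, ginv x y a jj * Mgm x y jj k) = if a = k then (1:ℝ) else 0 :=
    fun a k => by
      rw [← hginv x y ⟨h1, h3, h0, hS0⟩ a k]
      exact Finset.sum_congr rfl fun jj _ => by rw [hgv]
  have hi1 : ginv x y i 1 = Vv x y i := by
    calc ginv x y i 1
        = ∑ k, ginv x y i k * (if k = (1:Fin 4) then (1:ℝ) else 0) := by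
          simp [mul_ite, Finset.sum_ite_eq']
      _ = ∑ k, ginv x y i k * (∑ jj, Mgm x y k jj * Vv x y jj) :=
          Finset.sum_congr rfl fun k _ => by rw [MgmV x y hS h0.ne' h1 k]
      _ = ∑ jj, (∑ k, ginv x y i k * Mgm x y k jj) * Vv x y jj := by
          simp only [Finset.mul_sum, Finset.sum_mul]
          rw [Finset.sum_comm]
          exact Finset.sum_congr rfl fun k _ => Finset.sum_congr rfl fun jj _ => by ring
      _ = ∑ jj, (if i = jj then (1:ℝ) else 0) * Vv x y jj :=
          Finset.sum_congr rfl fun jj _ => by rw [hid i jj]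
      _ = Vv x y i := by simp [ite_mul, Finset.sum_ite_eq]
  have hDDi : (∑ k, ginv x y i k * DD x y k) = 2 * y i := by
    calc (∑ k, ginv x y i k * DD x y k)
        = ∑ k, ginv x y i k * (2 * ∑ jj, Mgm x y k jj * y jj) :=
          Finset.sum_congr rfl fun k _ => by rw [Mgmy x y hS k]; ring
      _ = ∑ jj, (∑ k, ginv x y i k * Mgm x y k jj) * (2 * y jj) := by
          simp only [Finset.mul_sum, Finset.sum_mul]
          rw [Finset.sum_comm]
          exact Finset.sum_congr rfl fun k _ => Finset.sum_congr rfl fun jj _ => by ring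
      _ = ∑ jj, (if i = jj then (1:ℝ) else 0) * (2 * y jj) :=
          Finset.sum_congr rfl fun jj _ => by rw [hid i jj]
      _ = 2 * y i := by simp [ite_mul, Finset.sum_ite_eq]
  rw [hG x y ⟨h1, h3, h0, hS0⟩ i]
  have hsum : (∑ k, ginv x y i k *
        ((∑ j, y j * pd (fun x' => pd (fun y' => F2 x' y') k y) j x)
          - pd (fun x' => F2 x' y) k x))
      = ∑ k, ginv x y i k * (-((y 1) * DD x y k) + (if k = (1:Fin 4) then F2 x y else 0)) :=
    Finset.sum_congr rfl fun k _ => by rw [brval x y hS k]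
  rw [hsum]
  have hsplit : (∑ k, ginv x y i k * (-((y 1) * DD x y k) + (if k = (1:Fin 4) then F2 x y else 0)))
      = -((y 1) * (∑ k, ginv x y i k * DD x y k)) + F2 x y * ginv x y i 1 := by
    simp only [Fin.sum_univ_four]
    simp only [Fin.reduceEq, if_false, ite_false, if_true, ite_true]
    ring
  rw [hsplit, hDDi, hi1]
  -- now pure algebra
  have hE : Real.exp (-(x 1)) ≠ 0 := Real.exp_ne_zero _
  have hPne' : (((y 1)^3+(y 2)^3+(y 3)^3 : ℝ)) ^ ((1:ℝ)/3) ≠ 0 := by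
    have := Real.rpow_pos_of_pos hS ((1:ℝ)/3); simp only [Sc] at this; exact this.ne'
  fin_cases i
  · show (1/4 : ℝ) * (-((y 1) * (2 * y 0)) + F2 x y * Vv x y 0) = Gexp y 0
    simp only [F2, Vv, Gexp, Sc, Matrix.cons_val_zero]
    field_simp
    ring
  · show (1/4 : ℝ) * (-((y 1) * (2 * y 1)) + F2 x y * Vv x y 1) = Gexp y 1
    simp only [F2, Vv, Gexp, Sc, Matrix.cons_val_one, Matrix.head_cons, Matrix.cons_val_zero]
    field_simp
    ring
  · show (1/4 : ℝ) * (-((y 1) * (2 * y 2)) + F2 x y * Vv x y 2) = Gexp y 2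
    simp only [F2, Vv, Gexp, Sc, Matrix.cons_val_two, Matrix.tail_cons, Matrix.head_cons]
    field_simp
    ring
  · show (1/4 : ℝ) * (-((y 1) * (2 * y 3)) + F2 x y * Vv x y 3) = Gexp y 3
    simp only [F2, Vv, Gexp, Sc, Matrix.cons_val_three, Matrix.tail_cons, Matrix.head_cons]
    field_simp
    ring

lemma evU (x y : Fin 4 → ℝ) (hU : U x y) (j : Fin 4) :
    ∀ᶠ t in nhds (y j), U x (Function.update y j t) := by
  obtain ⟨h1, h3, h0, hS0⟩ := hU
  have hS : 0 < Sc y := by simpa [Sc] using hS0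
  have hc : ∀ k : Fin 4, Continuous fun t : ℝ => Function.update y j t k := by
    intro k
    have hfk : (fun t : ℝ => Function.update y j t k) = fun t => if k = j then t else y k := by
      funext t; simp [Function.update_apply]
    rw [hfk]
    by_cases h : k = j
    · simp only [h, if_true, ite_true]; exact continuous_id
    · simp only [h, if_false, ite_false]; exact continuous_const
  have e1 := (hc 1).continuousAt.eventually_ne
    (show Function.update y j (y j) 1 ≠ 0 by simpa using h1)
  have e3 := (hc 3).continuousAt.eventually_ne
    (show Function.update y j (y j) 3 ≠ 0 by simpa using h3)
  have e0 : ∀ᶠ t in nhds (y j), 0 < Function.update y j t 0 :=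
    (hc 0).continuousAt.eventually (eventually_gt_nhds (by simpa using h0))
  have eS := evSc y j hS
  filter_upwards [e1, e3, e0, eS] with t ht1 ht3 ht0 htS
  exact ⟨ht1, ht3, ht0, by simpa [Sc] using htS⟩


set_option maxHeartbeats 1000000 in
/-- the Barthel connection of `F² = e^{−x2} y1 (y2³+y3³+y4³)^{1/3}` has nonzero
coefficients `N²_2 = −(4y2³+y3³+y4³)/(4y2²)`, `N²_3 = (3/4)y3²/y2`, `N²_4 = (3/4)y4²/y2`,
`N³_2 = −(3/4)y3`, `N³_3 = −(3/4)y2`, `N⁴_2 = −(3/4)y4`, `N⁴_4 = −(3/4)y2`,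
and all others vanish. -/
theorem statement9
    (g ginv : (Fin 4 → ℝ) → (Fin 4 → ℝ) → Fin 4 → Fin 4 → ℝ)
    (G : (Fin 4 → ℝ) → (Fin 4 → ℝ) → Fin 4 → ℝ)
    (N : (Fin 4 → ℝ) → (Fin 4 → ℝ) → Fin 4 → Fin 4 → ℝ)
    (hg : ∀ x y, U x y → ∀ i j,
      g x y i j = (1 / 2) * pd (fun y' => pd (fun y'' => F2 x y'') j y') i y)
    (hginv : ∀ x y, U x y → ∀ i k,
      (∑ j, ginv x y i j * g x y j k) = if i = k then (1 : ℝ) else 0)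
    (hG : ∀ x y, U x y → ∀ i,
      G x y i = (1 / 4) * ∑ k, ginv x y i k *
        ((∑ j, y j * pd (fun x' => pd (fun y' => F2 x' y') k y) j x)
          - pd (fun x' => F2 x' y) k x))
    (hN : ∀ x y, U x y → ∀ i j, N x y i j = pd (fun y' => G x y' i) j y) :
    ∀ x y, U x y → ∀ i j,
      N x y i j =
        (!![0, 0, 0, 0;
            0, -(4 * (y 1) ^ 3 + (y 2) ^ 3 + (y 3) ^ 3) / (4 * (y 1) ^ 2),
              (3 / 4) * (y 2) ^ 2 / (y 1), (3 / 4) * (y 3) ^ 2 / (y 1);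
            0, -(3 / 4) * (y 2), -(3 / 4) * (y 1), 0;
            0, -(3 / 4) * (y 3), 0, -(3 / 4) * (y 1)] : Matrix (Fin 4) (Fin 4) ℝ) i j := by
  intro x y hU i j
  have hGv := Gval g ginv G hg hginv hG
  rw [hN x y hU i j, pd]
  have hev : (fun t => G x (Function.update y j t) i)
      =ᶠ[nhds (y j)] (fun t => Gexp (Function.update y j t) i) :=
    (evU x y hU j).mono (fun t ht => hGv x _ ht i)
  rw [hev.deriv_eq]
  obtain ⟨h1, h3, h0, hS0⟩ := hU
  fin_cases i <;> fin_cases j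
  · show deriv (fun t => Gexp (Function.update y 0 t) 0) (y 0) = _
    have hfun : (fun t => Gexp (Function.update y 0 t) 0) = fun _ : ℝ => (0 : ℝ) := by
      funext t; simp [Gexp, Function.update_apply]
    rw [hfun, deriv_const]
    simp [Matrix.cons_val_zero, Matrix.cons_val_one, Matrix.head_cons, Matrix.cons_val_two, Matrix.tail_cons, Matrix.cons_val_three, Matrix.cons_val', Matrix.empty_val', Matrix.cons_val_fin_one, Matrix.head_fin_const, Matrix.vecHead, Matrix.vecTail]
  · show deriv (fun t => Gexp (Function.update y 1 t) 0) (y 1) = _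
    have hfun : (fun t => Gexp (Function.update y 1 t) 0) = fun _ : ℝ => (0 : ℝ) := by
      funext t; simp [Gexp, Function.update_apply]
    rw [hfun, deriv_const]
    simp [Matrix.cons_val_zero, Matrix.cons_val_one, Matrix.head_cons, Matrix.cons_val_two, Matrix.tail_cons, Matrix.cons_val_three, Matrix.cons_val', Matrix.empty_val', Matrix.cons_val_fin_one, Matrix.head_fin_const, Matrix.vecHead, Matrix.vecTail]
  · show deriv (fun t => Gexp (Function.update y 2 t) 0) (y 2) = _
    have hfun : (fun t => Gexp (Function.update y 2 t) 0) = fun _ : ℝ => (0 : ℝ) := by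
      funext t; simp [Gexp, Function.update_apply]
    rw [hfun, deriv_const]
    simp [Matrix.cons_val_zero, Matrix.cons_val_one, Matrix.head_cons, Matrix.cons_val_two, Matrix.tail_cons, Matrix.cons_val_three, Matrix.cons_val', Matrix.empty_val', Matrix.cons_val_fin_one, Matrix.head_fin_const, Matrix.vecHead, Matrix.vecTail]
  · show deriv (fun t => Gexp (Function.update y 3 t) 0) (y 3) = _
    have hfun : (fun t => Gexp (Function.update y 3 t) 0) = fun _ : ℝ => (0 : ℝ) := by
      funext t; simp [Gexp, Function.update_apply]
    rw [hfun, deriv_const]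
    simp [Matrix.cons_val_zero, Matrix.cons_val_one, Matrix.head_cons, Matrix.cons_val_two, Matrix.tail_cons, Matrix.cons_val_three, Matrix.cons_val', Matrix.empty_val', Matrix.cons_val_fin_one, Matrix.head_fin_const, Matrix.vecHead, Matrix.vecTail]
  · show deriv (fun t => Gexp (Function.update y 0 t) 1) (y 0) = _
    have hfun : (fun t => Gexp (Function.update y 0 t) 1) = fun _ : ℝ => (((y 2)^3 + (y 3)^3 - 2*(y 1)^3)/(4*(y 1)) : ℝ) := by
      funext t; simp [Gexp, Function.update_apply]
    rw [hfun, deriv_const]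
    simp [Matrix.cons_val_zero, Matrix.cons_val_one, Matrix.head_cons, Matrix.cons_val_two, Matrix.tail_cons, Matrix.cons_val_three, Matrix.cons_val', Matrix.empty_val', Matrix.cons_val_fin_one, Matrix.head_fin_const, Matrix.vecHead, Matrix.vecTail]
  · show deriv (fun t => Gexp (Function.update y 1 t) 1) (y 1) = _
    have hfun : (fun t => Gexp (Function.update y 1 t) 1) = fun t : ℝ => (((y 2)^3 + (y 3)^3 - 2*t^3)/(4*t) : ℝ) := by
      funext t; simp [Gexp, Function.update_apply]
      try ring
    have hnum : HasDerivAt (fun t : ℝ => (y 2)^3 + (y 3)^3 - 2*t^3) (-(2*(3*(y 1)^2))) (y 1) := by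
      simpa using ((hasDerivAt_pow 3 (y 1)).const_mul (2:ℝ)).const_sub ((y 2)^3 + (y 3)^3)
    have hden : HasDerivAt (fun t : ℝ => 4*t) (4:ℝ) (y 1) := by
      simpa using (hasDerivAt_id (y 1)).const_mul (4:ℝ)
    have hd := hnum.div hden (mul_ne_zero (by norm_num) h1)
    rw [hfun]; erw [hd.deriv]
    simp [Matrix.cons_val_zero, Matrix.cons_val_one, Matrix.head_cons, Matrix.cons_val_two, Matrix.tail_cons, Matrix.cons_val_three, Matrix.cons_val', Matrix.empty_val', Matrix.cons_val_fin_one, Matrix.head_fin_const, Matrix.vecHead, Matrix.vecTail]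
    field_simp
    try ring
  · show deriv (fun t => Gexp (Function.update y 2 t) 1) (y 2) = _
    have hfun : (fun t => Gexp (Function.update y 2 t) 1) = fun t : ℝ => ((t^3 + (y 3)^3 - 2*(y 1)^3)/(4*(y 1)) : ℝ) := by
      funext t; simp [Gexp, Function.update_apply]
      try ring
    have hd := (((hasDerivAt_pow 3 (y 2)).add_const ((y 3)^3)).sub_const (2*(y 1)^3)).div_const
      (4*(y 1))
    rw [hfun, hd.deriv]
    simp [Matrix.cons_val_zero, Matrix.cons_val_one, Matrix.head_cons, Matrix.cons_val_two, Matrix.tail_cons, Matrix.cons_val_three, Matrix.cons_val', Matrix.empty_val', Matrix.cons_val_fin_one, Matrix.head_fin_const, Matrix.vecHead, Matrix.vecTail]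
    field_simp
    try ring
  · show deriv (fun t => Gexp (Function.update y 3 t) 1) (y 3) = _
    have hfun : (fun t => Gexp (Function.update y 3 t) 1) = fun t : ℝ => (((y 2)^3 + t^3 - 2*(y 1)^3)/(4*(y 1)) : ℝ) := by
      funext t; simp [Gexp, Function.update_apply]
      try ring
    have hd := (((hasDerivAt_pow 3 (y 3)).const_add ((y 2)^3)).sub_const (2*(y 1)^3)).div_const
      (4*(y 1))
    rw [hfun, hd.deriv]
    simp [Matrix.cons_val_zero, Matrix.cons_val_one, Matrix.head_cons, Matrix.cons_val_two, Matrix.tail_cons, Matrix.cons_val_three, Matrix.cons_val', Matrix.empty_val', Matrix.cons_val_fin_one, Matrix.head_fin_const, Matrix.vecHead, Matrix.vecTail]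
    field_simp
    try ring
  · show deriv (fun t => Gexp (Function.update y 0 t) 2) (y 0) = _
    have hfun : (fun t => Gexp (Function.update y 0 t) 2) = fun _ : ℝ => (-((3:ℝ)/4)*((y 1)*(y 2)) : ℝ) := by
      funext t; simp [Gexp, Function.update_apply]
    rw [hfun, deriv_const]
    simp [Matrix.cons_val_zero, Matrix.cons_val_one, Matrix.head_cons, Matrix.cons_val_two, Matrix.tail_cons, Matrix.cons_val_three, Matrix.cons_val', Matrix.empty_val', Matrix.cons_val_fin_one, Matrix.head_fin_const, Matrix.vecHead, Matrix.vecTail]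
  · show deriv (fun t => Gexp (Function.update y 1 t) 2) (y 1) = _
    have hfun : (fun t => Gexp (Function.update y 1 t) 2) = fun t : ℝ => (-((3:ℝ)/4)*(t*(y 2)) : ℝ) := by
      funext t; simp [Gexp, Function.update_apply]
      try ring
    have hd : HasDerivAt (fun t : ℝ => -((3:ℝ)/4)*(t*(y 2))) (-((3:ℝ)/4)*(y 2)) (y 1) := by
      simpa using ((hasDerivAt_id (y 1)).mul_const (y 2)).const_mul (-((3:ℝ)/4))
    rw [hfun, hd.deriv]
    simp [Matrix.cons_val_zero, Matrix.cons_val_one, Matrix.head_cons, Matrix.cons_val_two, Matrix.tail_cons, Matrix.cons_val_three, Matrix.cons_val', Matrix.empty_val', Matrix.cons_val_fin_one, Matrix.head_fin_const, Matrix.vecHead, Matrix.vecTail]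
  · show deriv (fun t => Gexp (Function.update y 2 t) 2) (y 2) = _
    have hfun : (fun t => Gexp (Function.update y 2 t) 2) = fun t : ℝ => (-((3:ℝ)/4)*((y 1)*t) : ℝ) := by
      funext t; simp [Gexp, Function.update_apply]
      try ring
    have hd : HasDerivAt (fun t : ℝ => -((3:ℝ)/4)*((y 1)*t)) (-((3:ℝ)/4)*(y 1)) (y 2) := by
      simpa using ((hasDerivAt_id (y 2)).const_mul (y 1)).const_mul (-((3:ℝ)/4))
    rw [hfun, hd.deriv]
    simp [Matrix.cons_val_zero, Matrix.cons_val_one, Matrix.head_cons, Matrix.cons_val_two, Matrix.tail_cons, Matrix.cons_val_three, Matrix.cons_val', Matrix.empty_val', Matrix.cons_val_fin_one, Matrix.head_fin_const, Matrix.vecHead, Matrix.vecTail]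
  · show deriv (fun t => Gexp (Function.update y 3 t) 2) (y 3) = _
    have hfun : (fun t => Gexp (Function.update y 3 t) 2) = fun _ : ℝ => (-((3:ℝ)/4)*((y 1)*(y 2)) : ℝ) := by
      funext t; simp [Gexp, Function.update_apply]
    rw [hfun, deriv_const]
    simp [Matrix.cons_val_zero, Matrix.cons_val_one, Matrix.head_cons, Matrix.cons_val_two, Matrix.tail_cons, Matrix.cons_val_three, Matrix.cons_val', Matrix.empty_val', Matrix.cons_val_fin_one, Matrix.head_fin_const, Matrix.vecHead, Matrix.vecTail]
  · show deriv (fun t => Gexp (Function.update y 0 t) 3) (y 0) = _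
    have hfun : (fun t => Gexp (Function.update y 0 t) 3) = fun _ : ℝ => (-((3:ℝ)/4)*((y 1)*(y 3)) : ℝ) := by
      funext t; simp [Gexp, Function.update_apply]
    rw [hfun, deriv_const]
    simp [Matrix.cons_val_zero, Matrix.cons_val_one, Matrix.head_cons, Matrix.cons_val_two, Matrix.tail_cons, Matrix.cons_val_three, Matrix.cons_val', Matrix.empty_val', Matrix.cons_val_fin_one, Matrix.head_fin_const, Matrix.vecHead, Matrix.vecTail]
  · show deriv (fun t => Gexp (Function.update y 1 t) 3) (y 1) = _
    have hfun : (fun t => Gexp (Function.update y 1 t) 3) = fun t : ℝ => (-((3:ℝ)/4)*(t*(y 3)) : ℝ) := by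
      funext t; simp [Gexp, Function.update_apply]
      try ring
    have hd : HasDerivAt (fun t : ℝ => -((3:ℝ)/4)*(t*(y 3))) (-((3:ℝ)/4)*(y 3)) (y 1) := by
      simpa using ((hasDerivAt_id (y 1)).mul_const (y 3)).const_mul (-((3:ℝ)/4))
    rw [hfun, hd.deriv]
    simp [Matrix.cons_val_zero, Matrix.cons_val_one, Matrix.head_cons, Matrix.cons_val_two, Matrix.tail_cons, Matrix.cons_val_three, Matrix.cons_val', Matrix.empty_val', Matrix.cons_val_fin_one, Matrix.head_fin_const, Matrix.vecHead, Matrix.vecTail]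
  · show deriv (fun t => Gexp (Function.update y 2 t) 3) (y 2) = _
    have hfun : (fun t => Gexp (Function.update y 2 t) 3) = fun _ : ℝ => (-((3:ℝ)/4)*((y 1)*(y 3)) : ℝ) := by
      funext t; simp [Gexp, Function.update_apply]
    rw [hfun, deriv_const]
    simp [Matrix.cons_val_zero, Matrix.cons_val_one, Matrix.head_cons, Matrix.cons_val_two, Matrix.tail_cons, Matrix.cons_val_three, Matrix.cons_val', Matrix.empty_val', Matrix.cons_val_fin_one, Matrix.head_fin_const, Matrix.vecHead, Matrix.vecTail]
  · show deriv (fun t => Gexp (Function.update y 3 t) 3) (y 3) = _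
    have hfun : (fun t => Gexp (Function.update y 3 t) 3) = fun t : ℝ => (-((3:ℝ)/4)*((y 1)*t) : ℝ) := by
      funext t; simp [Gexp, Function.update_apply]
      try ring
    have hd : HasDerivAt (fun t : ℝ => -((3:ℝ)/4)*((y 1)*t)) (-((3:ℝ)/4)*(y 1)) (y 3) := by
      simpa using ((hasDerivAt_id (y 3)).const_mul (y 1)).const_mul (-((3:ℝ)/4))
    rw [hfun, hd.deriv]
    simp [Matrix.cons_val_zero, Matrix.cons_val_one, Matrix.head_cons, Matrix.cons_val_two, Matrix.tail_cons, Matrix.cons_val_three, Matrix.cons_val', Matrix.empty_val', Matrix.cons_val_fin_one, Matrix.head_fin_const, Matrix.vecHead, Matrix.vecTail]
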